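/- Let k, p, p* be real numbers with 1 < k < p < p*, and let S, θ, λ, Pr be positive reals. Let ℓ > 0 satisfy ℓ^(p*−p) ≥ S/θ. Then for every t ≥ 0: θ·(1/p − 1/p*)·t − λ·(1/k − 1/p)·Pr·t^(k/p*) + (1/p − 1/p*)·θ·ℓ^(p*) ≥ c̄, where c̄ := (1/p − 1/p*)·[ S^(p*/(p*−p))·θ^(−p/(p*−p)) − λ^(p*/(p*−k))·θ^(−k/(p*−k))·Pr^(p*/(p*−k))·((p*−k)/k)·((p−k)/(p*−p))^(p*/(p*−k)) ]. -/

import Mathlib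

/-- Weighted AM–GM in the form needed: for `a, b > 0` and `0 < α < 1`,
`b * t ^ α ≤ a * t + (1 - α) * b * (α * b / a) ^ (α / (1 - α))` for all `t ≥ 0`. -/
lemma key_ineq (a b α : ℝ) (ha : 0 < a) (hb : 0 < b) (hα0 : 0 < α) (hα1 : α < 1) :
    ∀ t : ℝ, 0 ≤ t →
      b * t ^ α ≤ a * t + (1 - α) * (b * (α * b / a) ^ (α / (1 - α))) := by
  intro t ht
  have h1α : 0 < 1 - α := by linarith
  have hαa : (0:ℝ) < α / a := by positivity
  set y : ℝ := (b * (α / a) ^ α) ^ ((1 - α)⁻¹) with hy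
  have hy0 : 0 < y := by positivity
  have hyq : y = b * (α * b / a) ^ (α / (1 - α)) := by
    have h1 : α * b / a = b * (α / a) := by ring
    rw [hy, Real.mul_rpow hb.le (Real.rpow_nonneg hαa.le _), h1,
      Real.mul_rpow hb.le hαa.le, ← Real.rpow_mul hαa.le]
    have h2 : α * (1 - α)⁻¹ = α / (1 - α) := by rw [div_eq_mul_inv]
    have h3 : (1 - α)⁻¹ = 1 + α / (1 - α) := by field_simp; ring
    rw [h2]
    nth_rewrite 1 [h3]
    rw [Real.rpow_add hb, Real.rpow_one]
    ring
  have hg := Real.geom_mean_le_arith_mean2_weighted hα0.le h1α.le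
    (p₁ := a * t / α) (p₂ := y) (by positivity) hy0.le (by ring)
  have h4 : y ^ (1 - α) = b * (α / a) ^ α := by
    rw [hy, ← Real.rpow_mul (by positivity), inv_mul_cancel₀ h1α.ne', Real.rpow_one]
  have hL : (a * t / α) ^ α * y ^ (1 - α) = b * t ^ α := by
    rw [h4, show a * t / α = (a / α) * t from by ring, Real.mul_rpow (by positivity) ht,
      show (a / α) ^ α * t ^ α * (b * (α / a) ^ α)
        = b * t ^ α * ((a / α) ^ α * (α / a) ^ α) from by ring,
      ← Real.mul_rpow (by positivity) hαa.le,
      show a / α * (α / a) = 1 from by field_simp, Real.one_rpow, mul_one]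
  have h5 : α * (a * t / α) = a * t := by field_simp
  rw [hL, h5, hyq] at hg
  exact hg

/-- Core algebraic inequality proving the Palais–Smale condition below the level c̄
(Lemma 2.1, display (2.2)). -/
theorem stmt_2 (k p ps : ℝ) (hk : 1 < k) (hkp : k < p) (hpps : p < ps)
    (S θ lam Pr : ℝ) (hS : 0 < S) (hθ : 0 < θ) (hlam : 0 < lam) (hPr : 0 < Pr)
    (ℓ : ℝ) (hℓ : 0 < ℓ) (hℓS : S / θ ≤ ℓ ^ (ps - p)) :
    ∀ t : ℝ, 0 ≤ t →
      (1 / p - 1 / ps) *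
        (S ^ (ps / (ps - p)) * θ ^ (-p / (ps - p)) -
          lam ^ (ps / (ps - k)) * θ ^ (-k / (ps - k)) * Pr ^ (ps / (ps - k)) *
            ((ps - k) / k) * ((p - k) / (ps - p)) ^ (ps / (ps - k)))
      ≤ θ * (1 / p - 1 / ps) * t - lam * (1 / k - 1 / p) * Pr * t ^ (k / ps)
          + (1 / p - 1 / ps) * θ * ℓ ^ ps := by
  intro t ht
  have hk0 : (0:ℝ) < k := by linarith
  have hp0 : (0:ℝ) < p := by linarith
  have hps0 : (0:ℝ) < ps := by linarith
  have hpsk : (0:ℝ) < ps - k := by linarith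
  have hpsp : (0:ℝ) < ps - p := by linarith
  have hpk : (0:ℝ) < p - k := by linarith
  have hA : (0:ℝ) < 1 / p - 1 / ps := by
    rw [sub_pos]; exact one_div_lt_one_div_of_lt hp0 hpps
  have hB : (0:ℝ) < 1 / k - 1 / p := by
    rw [sub_pos]; exact one_div_lt_one_div_of_lt hk0 hkp
  have ha : (0:ℝ) < θ * (1 / p - 1 / ps) := by positivity
  have hb : (0:ℝ) < lam * (1 / k - 1 / p) * Pr := by positivity
  have hα0 : (0:ℝ) < k / ps := by positivity
  have hα1 : k / ps < 1 := (div_lt_one hps0).mpr (by linarith)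
  have hM : (0:ℝ) < lam * Pr * ((p - k) / (ps - p)) := by positivity
  -- Step 1: the `ℓ` term
  have hr : (0:ℝ) < ps / (ps - p) := by positivity
  have h0 : (S / θ) ^ (ps / (ps - p)) ≤ ℓ ^ ps := by
    have h01 : (S / θ) ^ (ps / (ps - p)) ≤ (ℓ ^ (ps - p)) ^ (ps / (ps - p)) :=
      Real.rpow_le_rpow (by positivity) hℓS hr.le
    rwa [← Real.rpow_mul hℓ.le,
      show (ps - p) * (ps / (ps - p)) = ps from by field_simp] at h01
  have hθpow : θ * (S / θ) ^ (ps / (ps - p))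
      = S ^ (ps / (ps - p)) * θ ^ (-p / (ps - p)) := by
    rw [Real.div_rpow hS.le hθ.le,
      show -p / (ps - p) = 1 - ps / (ps - p) from by field_simp; ring,
      Real.rpow_sub hθ, Real.rpow_one]
    ring
  have h1 : S ^ (ps / (ps - p)) * θ ^ (-p / (ps - p)) ≤ θ * ℓ ^ ps := by
    rw [← hθpow]
    exact mul_le_mul_of_nonneg_left h0 hθ.le
  -- Step 2: the `t` terms via key_ineq
  have hkey := key_ineq (θ * (1 / p - 1 / ps)) (lam * (1 / k - 1 / p) * Pr) (k / ps)
    ha hb hα0 hα1 t ht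
  -- Step 3: identify the constant
  have hC : (1 - k / ps) * (lam * (1 / k - 1 / p) * Pr *
        (k / ps * (lam * (1 / k - 1 / p) * Pr) / (θ * (1 / p - 1 / ps)))
          ^ (k / ps / (1 - k / ps)))
      = (1 / p - 1 / ps) *
        (lam ^ (ps / (ps - k)) * θ ^ (-k / (ps - k)) * Pr ^ (ps / (ps - k)) *
          ((ps - k) / k) * ((p - k) / (ps - p)) ^ (ps / (ps - k))) := by
    have hne : (1:ℝ) - k / ps ≠ 0 := by
      have : k / ps < 1 := hα1
      linarith
    have f1 : k / ps / (1 - k / ps) = k / (ps - k) := by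
      field_simp
    have hab : k / ps * (lam * (1 / k - 1 / p) * Pr) / (θ * (1 / p - 1 / ps))
        = lam * Pr * ((p - k) / (ps - p)) / θ := by
      rw [div_eq_div_iff ha.ne' hθ.ne']
      field_simp
    rw [f1, hab, Real.div_rpow hM.le hθ.le]
    have E1 : lam * Pr * ((p - k) / (ps - p)) *
          (lam * Pr * ((p - k) / (ps - p))) ^ (k / (ps - k))
        = (lam * Pr * ((p - k) / (ps - p))) ^ (ps / (ps - k)) := by
      rw [show ps / (ps - k) = 1 + k / (ps - k) from by field_simp; ring,
        Real.rpow_add hM, Real.rpow_one]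
    have E2 : (lam * Pr * ((p - k) / (ps - p))) ^ (ps / (ps - k))
        = lam ^ (ps / (ps - k)) * Pr ^ (ps / (ps - k)) *
            ((p - k) / (ps - p)) ^ (ps / (ps - k)) := by
      rw [Real.mul_rpow (by positivity) (by positivity),
        Real.mul_rpow hlam.le hPr.le]
    have E3 : θ ^ (-k / (ps - k)) = (θ ^ (k / (ps - k)))⁻¹ := by
      rw [show -k / (ps - k) = -(k / (ps - k)) from by ring, Real.rpow_neg hθ.le]
    have hTe : (0:ℝ) < θ ^ (k / (ps - k)) := Real.rpow_pos_of_pos hθ _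
    rw [E3, show (1 / p - 1 / ps) *
          (lam ^ (ps / (ps - k)) * (θ ^ (k / (ps - k)))⁻¹ * Pr ^ (ps / (ps - k)) *
            ((ps - k) / k) * ((p - k) / (ps - p)) ^ (ps / (ps - k)))
        = (1 / p - 1 / ps) * ((ps - k) / k) *
            (lam ^ (ps / (ps - k)) * Pr ^ (ps / (ps - k)) *
              ((p - k) / (ps - p)) ^ (ps / (ps - k))) * (θ ^ (k / (ps - k)))⁻¹
          from by ring, ← E2, ← E1]
    field_simp
  rw [hC] at hkey
  have hgoal : (1 / p - 1 / ps) *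
      (S ^ (ps / (ps - p)) * θ ^ (-p / (ps - p)) -
        lam ^ (ps / (ps - k)) * θ ^ (-k / (ps - k)) * Pr ^ (ps / (ps - k)) *
          ((ps - k) / k) * ((p - k) / (ps - p)) ^ (ps / (ps - k)))
      = (1 / p - 1 / ps) * (S ^ (ps / (ps - p)) * θ ^ (-p / (ps - p)))
        - (1 / p - 1 / ps) *
          (lam ^ (ps / (ps - k)) * θ ^ (-k / (ps - k)) * Pr ^ (ps / (ps - k)) *
            ((ps - k) / k) * ((p - k) / (ps - p)) ^ (ps / (ps - k))) := by ring
  have h1' : (1 / p - 1 / ps) * (S ^ (ps / (ps - p)) * θ ^ (-p / (ps - p)))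
      ≤ (1 / p - 1 / ps) * (θ * ℓ ^ ps) :=
    mul_le_mul_of_nonneg_left h1 hA.le
  rw [hgoal]
  nlinarith [hkey, h1']
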